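/- Let H be a hypergroup and K a closed subhypergroup with S_γ ⊆ K (where S_γ is the γ-heart of H, equivalently the derived subhypergroup H'). Then K is normal in H, i.e. x∘K = K∘x for all x ∈ H, and H/K is an abelian group. -/

import Mathlib

open Set

/-- A hypergroup: a nonempty-set-valued binary hyperoperation that is associative
and reproductive. -/
structure Hypergroup (H : Type) where
  hmul : H → H → Set H
  nonempty : ∀ a b, (hmul a b).Nonempty
  assoc : ∀ a b c, (⋃ x ∈ hmul a b, hmul x c) = ⋃ y ∈ hmul b c, hmul a y
  reproL : ∀ a, (⋃ x, hmul a x) = Set.univ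
  reproR : ∀ a, (⋃ x, hmul x a) = Set.univ

namespace Hypergroup

variable {H : Type}

/-- Product of two subsets. -/
def smul (hg : Hypergroup H) (A B : Set H) : Set H := ⋃ a ∈ A, ⋃ b ∈ B, hg.hmul a b

/-- Hyperproduct of an element with a list of further factors. -/
def hprod (hg : Hypergroup H) : H → List H → Set H
  | a, [] => {a}
  | a, b :: l => ⋃ x ∈ hg.hmul a b, hg.hprod x l

/-- Hyperproduct of a (nonempty) list of factors. -/
def sprod (hg : Hypergroup H) : List H → Set H
  | [] => ∅
  | a :: l => hg.hprod a l

/-- The relation β : being together in some finite hyperproduct. -/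
def beta (hg : Hypergroup H) (a b : H) : Prop := ∃ l, a ∈ hg.sprod l ∧ b ∈ hg.sprod l

/-- β*, the transitive (equivalence) closure of β. -/
def betaStar (hg : Hypergroup H) : H → H → Prop := Relation.EqvGen hg.beta

/-- The relation γ : lying in hyperproducts of permuted factor lists. -/
def gamma (hg : Hypergroup H) (a b : H) : Prop :=
  ∃ l l' : List H, l.Perm l' ∧ a ∈ hg.sprod l ∧ b ∈ hg.sprod l'

/-- γ*, the transitive (equivalence) closure of γ. -/
def gammaStar (hg : Hypergroup H) : H → H → Prop := Relation.EqvGen hg.gamma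

/-- A strongly regular equivalence relation. -/
def StronglyRegular (hg : Hypergroup H) (r : H → H → Prop) : Prop :=
  Equivalence r ∧
  ∀ a b x, r a b →
    (∀ u ∈ hg.hmul a x, ∀ v ∈ hg.hmul b x, r u v) ∧
    (∀ u ∈ hg.hmul x a, ∀ v ∈ hg.hmul x b, r u v)

/-- A regular equivalence relation. -/
def Regular (hg : Hypergroup H) (r : H → H → Prop) : Prop :=
  Equivalence r ∧
  ∀ a b x, r a b →
    ((∀ u ∈ hg.hmul a x, ∃ v ∈ hg.hmul b x, r u v) ∧
     (∀ v ∈ hg.hmul b x, ∃ u ∈ hg.hmul a x, r u v)) ∧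
    ((∀ u ∈ hg.hmul x a, ∃ v ∈ hg.hmul x b, r u v) ∧
     (∀ v ∈ hg.hmul x b, ∃ u ∈ hg.hmul x a, r u v))

/-- A subhypergroup: nonempty, closed under the hyperoperation, reproductive inside. -/
def IsSubhypergroup (hg : Hypergroup H) (K : Set H) : Prop :=
  K.Nonempty ∧ (∀ a ∈ K, ∀ b ∈ K, hg.hmul a b ⊆ K) ∧
  (∀ a ∈ K, K ⊆ hg.smul {a} K) ∧ (∀ a ∈ K, K ⊆ hg.smul K {a})

/-- A closed subhypergroup: solutions of `b ∈ a∘x`, `b ∈ x∘a` with `a,b ∈ K` lie in `K`. -/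
def IsClosed (hg : Hypergroup H) (K : Set H) : Prop :=
  ∀ a ∈ K, ∀ b ∈ K, ∀ x, (b ∈ hg.hmul a x → x ∈ K) ∧ (b ∈ hg.hmul x a → x ∈ K)

/-- A complete part: if a finite hyperproduct meets it, it contains it. -/
def IsCompletePart (hg : Hypergroup H) (C : Set H) : Prop :=
  ∀ l : List H, l ≠ [] → (hg.sprod l ∩ C).Nonempty → hg.sprod l ⊆ C

/-- The β-heart `S_β` : elements whose β*-class acts as identity. -/
def heartBeta (hg : Hypergroup H) : Set H :=
  {h | ∀ x, ∀ z ∈ hg.hmul x h, hg.betaStar z x}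

/-- The γ-heart `S_γ` (the derived subhypergroup `H'`). -/
def heartGamma (hg : Hypergroup H) : Set H :=
  {h | ∀ x, ∀ z ∈ hg.hmul x h, hg.gammaStar z x}

/-- The coset `x ∘ K`. -/
def coset (hg : Hypergroup H) (K : Set H) (x : H) : Set H := hg.smul {x} K

/-- Normal subhypergroup: `x ∘ K = K ∘ x` for all `x`. -/
def IsNormal (hg : Hypergroup H) (K : Set H) : Prop :=
  ∀ x, hg.smul {x} K = hg.smul K {x}

/-- `φ : H → G` realizes the quotient group of `H` modulo the relation `r`. -/
def IsQuotientGroupMap (hg : Hypergroup H) (r : H → H → Prop) {G : Type} [Group G]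
    (φ : H → G) : Prop :=
  Function.Surjective φ ∧ (∀ a b, φ a = φ b ↔ r a b) ∧
  ∀ a b, ∀ z ∈ hg.hmul a b, φ z = φ a * φ b

/-- The set of identities of a hypergroup. -/
def Ident (hg : Hypergroup H) : Set H :=
  {e | ∀ x, x ∈ hg.hmul e x ∧ x ∈ hg.hmul x e}

/-- `C_H(x)`. -/
def Cset (hg : Hypergroup H) (x : H) : Set H :=
  {y | (hg.Ident ∩ (hg.hmul y x ∩ hg.hmul x y)).Nonempty}

/-- A strongly regular hypergroup: identities exist and each `C_H(x)` is a singleton. -/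
def IsStronglyRegularHypergroup (hg : Hypergroup H) : Prop :=
  hg.Ident.Nonempty ∧ ∀ x, ∃ y, hg.Cset x = {y}

end Hypergroup

/-- A canonical hypergroup. -/
structure CanonicalHypergroup (H : Type) extends Hypergroup H where
  comm : ∀ a b, hmul a b = hmul b a
  zero : H
  zero_hmul : ∀ x, hmul zero x = {x}
  inv : H → H
  inv_spec : ∀ x, zero ∈ hmul x (inv x)
  inv_unique : ∀ x y, zero ∈ hmul x y → y = inv x
  reversible : ∀ x y z, x ∈ hmul y z → y ∈ hmul x (inv z)

/-- `π : H → Q` realizes the quotient hypergroup `H/K`. -/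
def IsQuotientHypergroupMap {H Q : Type} (hg : Hypergroup H) (K : Set H)
    (hq : Hypergroup Q) (π : H → Q) : Prop :=
  Function.Surjective π ∧ (∀ x y, π x = π y ↔ hg.coset K x = hg.coset K y) ∧
  ∀ x y, hq.hmul (π x) (π y) = π '' hg.hmul x y

namespace HGProof
open Hypergroup

variable {H : Type} (hg : Hypergroup H)

lemma mem_hmul_assoc {a b c z : H} :
    (∃ t ∈ hg.hmul a b, z ∈ hg.hmul t c) ↔ (∃ y ∈ hg.hmul b c, z ∈ hg.hmul a y) := by
  have h1 := Set.ext_iff.mp (hg.assoc a b c) z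
  simpa [Set.mem_iUnion] using h1

lemma hprod_singleton (a b : H) : hg.hprod a [b] = hg.hmul a b := by
  ext z; simp [Hypergroup.hprod]

lemma hprod_append (l₁ l₂ : List H) (a : H) :
    hg.hprod a (l₁ ++ l₂) = ⋃ x ∈ hg.hprod a l₁, hg.hprod x l₂ := by
  induction l₁ generalizing a with
  | nil => simp [Hypergroup.hprod]
  | cons b l ih =>
    show hg.hprod a (b :: (l ++ l₂)) = _
    ext z
    simp only [Hypergroup.hprod, Set.mem_iUnion, ih]
    constructor
    · rintro ⟨x, hx, y, hy, hz⟩; exact ⟨y, ⟨x, hx, hy⟩, hz⟩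
    · rintro ⟨y, ⟨x, hx, hy⟩, hz⟩; exact ⟨x, hx, y, hy, hz⟩

lemma hprod_cons (l : List H) (x c : H) :
    hg.hprod x (c :: l) = ⋃ a ∈ hg.hprod c l, hg.hmul x a := by
  induction l generalizing x c with
  | nil => ext z; simp [Hypergroup.hprod]
  | cons d l ih =>
    ext z
    show z ∈ ⋃ w ∈ hg.hmul x c, hg.hprod w (d :: l) ↔ _
    simp only [Set.mem_iUnion, ih]
    constructor
    · rintro ⟨w, hw, a, ha, hz⟩
      have : ∃ y ∈ hg.hmul c a, z ∈ hg.hmul x y := (mem_hmul_assoc hg).mp ⟨w, hw, hz⟩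
      obtain ⟨y, hy, hz'⟩ := this
      exact ⟨y, ⟨a, ha, hy⟩, hz'⟩
    · rintro ⟨y, ⟨a, ha, hy⟩, hz⟩
      obtain ⟨w, hw, hz'⟩ := (mem_hmul_assoc hg).mpr ⟨y, hy, hz⟩
      exact ⟨w, hw, a, ha, hz'⟩

lemma sprod_pair (a b : H) : hg.sprod [a, b] = hg.hmul a b := hprod_singleton hg a b

lemma sprod_triple (a b c : H) :
    hg.sprod [a, b, c] = ⋃ t ∈ hg.hmul a b, hg.hmul t c := by
  show hg.hprod a [b, c] = _
  ext z
  simp only [Hypergroup.hprod, hprod_singleton, Set.mem_iUnion, Set.mem_singleton_iff]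
  constructor
  · rintro ⟨t, ht, y, hy, rfl⟩; exact ⟨t, ht, hy⟩
  · rintro ⟨t, ht, hy⟩; exact ⟨t, ht, _, hy, rfl⟩

end HGProof
namespace HGProof
open Hypergroup

variable {H : Type} (hg : Hypergroup H)

lemma gamma_of_same {a b z z' : H} (hz : z ∈ hg.hmul a b) (hz' : z' ∈ hg.hmul a b) :
    hg.gamma z z' :=
  ⟨[a, b], [a, b], List.Perm.refl _, by rwa [sprod_pair], by rwa [sprod_pair]⟩

lemma gamma_comm {a b z z' : H} (hz : z ∈ hg.hmul a b) (hz' : z' ∈ hg.hmul b a) :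
    hg.gamma z z' :=
  ⟨[a, b], [b, a], List.Perm.swap b a [], by rwa [sprod_pair], by rwa [sprod_pair]⟩

lemma exists_right_div (a b : H) : ∃ x, b ∈ hg.hmul a x := by
  have h := hg.reproL a
  have : b ∈ ⋃ x, hg.hmul a x := by rw [h]; trivial
  simpa [Set.mem_iUnion] using this

lemma exists_left_div (a b : H) : ∃ x, b ∈ hg.hmul x a := by
  have h := hg.reproR a
  have : b ∈ ⋃ x, hg.hmul x a := by rw [h]; trivial
  simpa [Set.mem_iUnion] using this

/-- right strong regularity of γ* -/
lemma gammaStar_right {a b : H} (h : hg.gammaStar a b) (x : H) :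
    ∀ z ∈ hg.hmul a x, ∀ z' ∈ hg.hmul b x, hg.gammaStar z z' := by
  induction h with
  | rel a b hab =>
    intro z hz z' hz'
    obtain ⟨l, l', hp, ha, hb⟩ := hab
    cases l with
    | nil => exact absurd ha (by simp [Hypergroup.sprod])
    | cons c l₀ =>
      cases l' with
      | nil => exact absurd hb (by simp [Hypergroup.sprod])
      | cons c' l₀' =>
        refine Relation.EqvGen.rel _ _ ⟨(c :: l₀) ++ [x], (c' :: l₀') ++ [x],
          hp.append_right [x], ?_, ?_⟩
        · show z ∈ hg.hprod c (l₀ ++ [x])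
          rw [hprod_append]
          simp only [Set.mem_iUnion, hprod_singleton]
          exact ⟨a, ha, hz⟩
        · show z' ∈ hg.hprod c' (l₀' ++ [x])
          rw [hprod_append]
          simp only [Set.mem_iUnion, hprod_singleton]
          exact ⟨b, hb, hz'⟩
  | refl a =>
    intro z hz z' hz'
    exact Relation.EqvGen.rel _ _ (gamma_of_same hg hz hz')
  | symm a b _ ih =>
    intro z hz z' hz'
    exact Relation.EqvGen.symm _ _ (ih z' hz' z hz)
  | trans a c b _ _ ih1 ih2 =>
    intro z hz z' hz'
    obtain ⟨w, hw⟩ := hg.nonempty c x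
    exact Relation.EqvGen.trans _ _ _ (ih1 z hz w hw) (ih2 w hw z' hz')

/-- left strong regularity of γ* -/
lemma gammaStar_left {a b : H} (h : hg.gammaStar a b) (x : H) :
    ∀ z ∈ hg.hmul x a, ∀ z' ∈ hg.hmul x b, hg.gammaStar z z' := by
  induction h with
  | rel a b hab =>
    intro z hz z' hz'
    obtain ⟨l, l', hp, ha, hb⟩ := hab
    cases l with
    | nil => exact absurd ha (by simp [Hypergroup.sprod])
    | cons c l₀ =>
      cases l' with
      | nil => exact absurd hb (by simp [Hypergroup.sprod])
      | cons c' l₀' =>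
        refine Relation.EqvGen.rel _ _ ⟨x :: c :: l₀, x :: c' :: l₀',
          hp.cons x, ?_, ?_⟩
        · show z ∈ hg.hprod x (c :: l₀)
          rw [hprod_cons]
          simp only [Set.mem_iUnion]
          exact ⟨a, ha, hz⟩
        · show z' ∈ hg.hprod x (c' :: l₀')
          rw [hprod_cons]
          simp only [Set.mem_iUnion]
          exact ⟨b, hb, hz'⟩
  | refl a =>
    intro z hz z' hz'
    exact Relation.EqvGen.rel _ _ (gamma_of_same hg hz hz')
  | symm a b _ ih =>
    intro z hz z' hz'
    exact Relation.EqvGen.symm _ _ (ih z' hz' z hz)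
  | trans a c b _ _ ih1 ih2 =>
    intro z hz z' hz'
    obtain ⟨w, hw⟩ := hg.nonempty x c
    exact Relation.EqvGen.trans _ _ _ (ih1 z hz w hw) (ih2 w hw z' hz')

/-- an element with a fixed point is γ*-neutral on the right -/
lemma gammaStar_of_self {u w : H} (hw : w ∈ hg.hmul w u) :
    ∀ x, ∀ z ∈ hg.hmul x u, hg.gammaStar z x := by
  intro x z hz
  obtain ⟨y, hy⟩ := exists_left_div hg w x
  refine Relation.EqvGen.rel _ _ ⟨[y, w, u], [y, w, u], List.Perm.refl _, ?_, ?_⟩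
  · rw [sprod_triple]
    simp only [Set.mem_iUnion]
    exact ⟨x, hy, hz⟩
  · rw [sprod_triple]
    simp only [Set.mem_iUnion]
    obtain ⟨t, ht, hx⟩ := (mem_hmul_assoc hg).mpr ⟨w, hw, hy⟩
    exact ⟨t, ht, hx⟩

end HGProof
namespace HGProof
open Hypergroup

variable {H : Type} (hg : Hypergroup H)

def gSetoid : Setoid H := ⟨hg.gammaStar, Relation.EqvGen.is_equivalence _⟩

def Gam (hg : Hypergroup H) : Type := Quotient (gSetoid hg)

def psi : H → Gam hg := Quotient.mk (gSetoid hg)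

lemma psi_surjective : Function.Surjective (psi hg) := fun q => q.exists_rep

lemma psi_eq_iff {a b : H} : psi hg a = psi hg b ↔ hg.gammaStar a b :=
  ⟨Quotient.exact, Quotient.sound (s := gSetoid hg)⟩

noncomputable def pick (a b : H) : H := (hg.nonempty a b).choose

lemma pick_mem (a b : H) : pick hg a b ∈ hg.hmul a b := (hg.nonempty a b).choose_spec

noncomputable def mulG : Gam hg → Gam hg → Gam hg :=
  Quotient.lift₂ (fun a b => psi hg (pick hg a b)) (by
    intro a b a' b' ha hb
    have h1 : hg.gammaStar (pick hg a b) (pick hg a' b) := by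
      exact gammaStar_right hg ha b _ (pick_mem hg a b) _ (pick_mem hg a' b)
    have h2 : hg.gammaStar (pick hg a' b) (pick hg a' b') := by
      exact gammaStar_left hg hb a' _ (pick_mem hg a' b) _ (pick_mem hg a' b')
    exact Quotient.sound (s := gSetoid hg) (Relation.EqvGen.trans _ _ _ h1 h2))

lemma mulG_mk (a b : H) : mulG hg (psi hg a) (psi hg b) = psi hg (pick hg a b) := rfl

lemma mulG_eq_of_mem {a b z : H} (hz : z ∈ hg.hmul a b) :
    mulG hg (psi hg a) (psi hg b) = psi hg z := by
  rw [mulG_mk]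
  exact Quotient.sound (s := gSetoid hg)
    (Relation.EqvGen.rel _ _ (gamma_of_same hg (pick_mem hg a b) hz))

end HGProof
namespace HGProof
open Hypergroup

variable {H : Type} (hg : Hypergroup H)

lemma mulG_assoc (A B C : Gam hg) : mulG hg (mulG hg A B) C = mulG hg A (mulG hg B C) := by
  obtain ⟨a, rfl⟩ := psi_surjective hg A
  obtain ⟨b, rfl⟩ := psi_surjective hg B
  obtain ⟨c, rfl⟩ := psi_surjective hg C
  rw [mulG_mk, mulG_mk, mulG_mk, mulG_mk]
  apply Quotient.sound (s := gSetoid hg)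
  refine Relation.EqvGen.rel _ _ ⟨[a, b, c], [a, b, c], List.Perm.refl _, ?_, ?_⟩
  · rw [sprod_triple]
    simp only [Set.mem_iUnion]
    exact ⟨pick hg a b, pick_mem hg a b, pick_mem hg _ c⟩
  · rw [sprod_triple]
    simp only [Set.mem_iUnion]
    obtain ⟨t, ht, hv⟩ := (mem_hmul_assoc hg).mpr
      ⟨pick hg b c, pick_mem hg b c, pick_mem hg a _⟩
    exact ⟨t, ht, hv⟩

lemma mulG_comm (A B : Gam hg) : mulG hg A B = mulG hg B A := by
  obtain ⟨a, rfl⟩ := psi_surjective hg A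
  obtain ⟨b, rfl⟩ := psi_surjective hg B
  rw [mulG_mk, mulG_mk]
  exact Quotient.sound (s := gSetoid hg)
    (Relation.EqvGen.rel _ _ (gamma_comm hg (pick_mem hg a b) (pick_mem hg b a)))

noncomputable def unit (hg : Hypergroup H) [Nonempty H] : H :=
  (exists_right_div hg (Classical.arbitrary H) (Classical.arbitrary H)).choose

lemma unit_spec [Nonempty H] :
    (Classical.arbitrary H) ∈ hg.hmul (Classical.arbitrary H) (unit hg) :=
  (exists_right_div hg (Classical.arbitrary H) (Classical.arbitrary H)).choose_spec

noncomputable def oneG (hg : Hypergroup H) [Nonempty H] : Gam hg := psi hg (unit hg)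

lemma mulG_oneG [Nonempty H] (A : Gam hg) : mulG hg A (oneG hg) = A := by
  obtain ⟨a, rfl⟩ := psi_surjective hg A
  rw [oneG, mulG_mk]
  exact Quotient.sound (s := gSetoid hg)
    (gammaStar_of_self hg (unit_spec hg) a _ (pick_mem hg a (unit hg)))

lemma exists_mulG (A B : Gam hg) : ∃ X, mulG hg A X = B := by
  obtain ⟨a, rfl⟩ := psi_surjective hg A
  obtain ⟨b, rfl⟩ := psi_surjective hg B
  obtain ⟨x, hx⟩ := exists_right_div hg a b
  exact ⟨psi hg x, mulG_eq_of_mem hg hx⟩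

noncomputable def invG (hg : Hypergroup H) [Nonempty H] (A : Gam hg) : Gam hg :=
  (exists_mulG hg A (oneG hg)).choose

lemma mulG_invG [Nonempty H] (A : Gam hg) : mulG hg A (invG hg A) = oneG hg :=
  (exists_mulG hg A (oneG hg)).choose_spec

noncomputable instance instCommGroupGam [Nonempty H] : CommGroup (Gam hg) where
  mul := mulG hg
  mul_assoc := mulG_assoc hg
  one := oneG hg
  one_mul := fun A => by show mulG hg (oneG hg) A = A; rw [mulG_comm]; exact mulG_oneG hg A
  mul_one := mulG_oneG hg
  inv := invG hg
  inv_mul_cancel := fun A => by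
    show mulG hg (invG hg A) A = oneG hg
    rw [mulG_comm]; exact mulG_invG hg A
  mul_comm := mulG_comm hg

lemma psi_mul [Nonempty H] {a b z : H} (hz : z ∈ hg.hmul a b) :
    psi hg z = psi hg a * psi hg b := (mulG_eq_of_mem hg hz).symm

end HGProof
namespace HGProof
open Hypergroup

variable {H : Type} (hg : Hypergroup H) (K : Set H)

lemma mem_coset_iff {x z : H} : z ∈ hg.coset K x ↔ ∃ k ∈ K, z ∈ hg.hmul x k := by
  simp [Hypergroup.coset, Hypergroup.smul]

lemma mem_smulK_iff {x z : H} : z ∈ hg.smul K {x} ↔ ∃ k ∈ K, z ∈ hg.hmul k x := by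
  simp [Hypergroup.smul]

lemma heart_of_psi_one [Nonempty H] {h : H} (hh : psi hg h = 1) : h ∈ hg.heartGamma := by
  simp only [Hypergroup.heartGamma, Set.mem_setOf_eq]
  intro x z hz
  have h1 : psi hg z = psi hg x := by
    rw [psi_mul hg hz, hh, mul_one]
  exact (psi_eq_iff hg).mp h1

lemma K_of_psi_one [Nonempty H] (hheart : hg.heartGamma ⊆ K) {k : H} (hk : psi hg k = 1) : k ∈ K :=
  hheart (heart_of_psi_one hg hk)

lemma exists_K_of_psi_eq [Nonempty H] (hheart : hg.heartGamma ⊆ K) {a b : H} (h : psi hg a = psi hg b) :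
    ∃ k ∈ K, b ∈ hg.hmul a k := by
  obtain ⟨x, hx⟩ := exists_right_div hg a b
  have h1 : psi hg b = psi hg a * psi hg x := psi_mul hg hx
  rw [h] at h1
  exact ⟨x, K_of_psi_one hg K hheart (left_eq_mul.mp h1), hx⟩

lemma mem_K_of_mul_one [Nonempty H] (hcl : hg.IsClosed K) (hheart : hg.heartGamma ⊆ K) {k t : H} (hk : k ∈ K)
    (h : psi hg k * psi hg t = 1) : t ∈ K := by
  obtain ⟨s, hs⟩ := hg.nonempty k t
  have hs1 : psi hg s = 1 := by rw [psi_mul hg hs]; exact h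
  have hsK : s ∈ K := K_of_psi_one hg K hheart hs1
  exact (hcl k hk s hsK t).1 hs

lemma mem_self_coset [Nonempty H] (hheart : hg.heartGamma ⊆ K) (x : H) : x ∈ hg.coset K x := by
  obtain ⟨k, hkK, hk⟩ := exists_K_of_psi_eq hg K hheart (rfl : psi hg x = psi hg x)
  exact (mem_coset_iff hg K).mpr ⟨k, hkK, hk⟩

lemma coset_eq_of_mem [Nonempty H] (hsub : hg.IsSubhypergroup K) (hcl : hg.IsClosed K) (hheart : hg.heartGamma ⊆ K) {k x z : H} (hk : k ∈ K) (hz : z ∈ hg.hmul x k) :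
    hg.coset K z = hg.coset K x := by
  apply Set.Subset.antisymm
  · intro w hw
    obtain ⟨k', hk', hw'⟩ := (mem_coset_iff hg K).mp hw
    obtain ⟨u, hu, hwu⟩ := (mem_hmul_assoc hg).mp ⟨z, hz, hw'⟩
    exact (mem_coset_iff hg K).mpr ⟨u, hsub.2.1 k hk k' hk' hu, hwu⟩
  · obtain ⟨t, ht⟩ := exists_right_div hg z x
    have h1 : psi hg k * psi hg t = 1 := by
      have hpx := psi_mul hg ht
      rw [psi_mul hg hz, mul_assoc] at hpx
      exact left_eq_mul.mp hpx
    have htK : t ∈ K := mem_K_of_mul_one hg K hcl hheart hk h1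
    intro w hw
    obtain ⟨k'', hk'', hw'⟩ := (mem_coset_iff hg K).mp hw
    obtain ⟨u, hu, hwu⟩ := (mem_hmul_assoc hg).mp ⟨x, ht, hw'⟩
    exact (mem_coset_iff hg K).mpr ⟨u, hsub.2.1 t htK k'' hk'' hu, hwu⟩

lemma coset_eq_of_psi_eq [Nonempty H] (hsub : hg.IsSubhypergroup K) (hcl : hg.IsClosed K) (hheart : hg.heartGamma ⊆ K) {a b : H} (h : psi hg a = psi hg b) :
    hg.coset K a = hg.coset K b := by
  obtain ⟨k, hkK, hk⟩ := exists_K_of_psi_eq hg K hheart h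
  exact (coset_eq_of_mem hg K hsub hcl hheart hkK hk).symm

lemma normalK [Nonempty H] (hsub : hg.IsSubhypergroup K) (hheart : hg.heartGamma ⊆ K) : hg.IsNormal K := by
  intro x
  apply Set.Subset.antisymm
  · intro z hz
    obtain ⟨k, hkK, hk⟩ := (mem_coset_iff hg K).mp hz
    obtain ⟨k', hk'⟩ := exists_left_div hg x z
    have heq : psi hg k = psi hg k' := by
      have h1 := psi_mul hg hk
      have h2 := psi_mul hg hk'
      rw [h1, mul_comm] at h2
      exact mul_right_cancel h2
    obtain ⟨s, hsK, hks⟩ := exists_K_of_psi_eq hg K hheart heq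
    exact (mem_smulK_iff hg K).mpr ⟨k', hsub.2.1 k hkK s hsK hks, hk'⟩
  · intro z hz
    obtain ⟨k, hkK, hk⟩ := (mem_smulK_iff hg K).mp hz
    obtain ⟨k', hk'⟩ := exists_right_div hg x z
    have heq : psi hg k = psi hg k' := by
      have h1 := psi_mul hg hk
      have h2 := psi_mul hg hk'
      rw [h1, mul_comm] at h2
      exact mul_left_cancel h2
    obtain ⟨s, hsK, hks⟩ := exists_K_of_psi_eq hg K hheart heq
    exact (mem_coset_iff hg K).mpr ⟨k', hsub.2.1 k hkK s hsK hks, hk'⟩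

lemma exists_unitK [Nonempty H] (hsub : hg.IsSubhypergroup K) : ∃ e ∈ K, psi hg e = 1 := by
  obtain ⟨k₀, hk₀⟩ := hsub.1
  have h := hsub.2.2.2 k₀ hk₀ hk₀
  obtain ⟨k₁, hk₁K, hm⟩ := (mem_smulK_iff hg K).mp h
  have : psi hg k₀ = psi hg k₁ * psi hg k₀ := psi_mul hg hm
  exact ⟨k₁, hk₁K, (right_eq_mul.mp this)⟩

noncomputable def Ksub [Nonempty H] (hsub : hg.IsSubhypergroup K) (hcl : hg.IsClosed K) (hheart : hg.heartGamma ⊆ K) : Subgroup (Gam hg) where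
  carrier := psi hg '' K
  mul_mem' := by
    rintro _ _ ⟨k1, hk1, rfl⟩ ⟨k2, hk2, rfl⟩
    exact ⟨pick hg k1 k2, hsub.2.1 k1 hk1 k2 hk2 (pick_mem hg k1 k2),
      (psi_mul hg (pick_mem hg k1 k2)).symm⟩
  one_mem' := by
    obtain ⟨e, heK, he⟩ := exists_unitK hg K hsub
    exact ⟨e, heK, he⟩
  inv_mem' := by
    rintro _ ⟨k, hkK, rfl⟩
    obtain ⟨e, heK, he⟩ := exists_unitK hg K hsub
    obtain ⟨t, ht⟩ := exists_right_div hg k e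
    have h1 : psi hg k * psi hg t = 1 := by rw [← psi_mul hg ht, he]
    exact ⟨t, mem_K_of_mul_one hg K hcl hheart hkK h1,
      (inv_eq_of_mul_eq_one_right h1).symm⟩

end HGProof
open Hypergroup in
/-- if K is a closed subhypergroup with S_γ ⊆ K, then K is normal
and H/K is an abelian group. -/
theorem stmt3 {H : Type} (hg : Hypergroup H) (K : Set H)
    (hsub : hg.IsSubhypergroup K) (hcl : hg.IsClosed K)
    (hheart : hg.heartGamma ⊆ K) :
    hg.IsNormal K ∧
    ∃ (G : Type) (_ : CommGroup G) (φ : H → G),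
      hg.IsQuotientGroupMap (fun x y => hg.coset K x = hg.coset K y) φ := by
  haveI : Nonempty H := ⟨hsub.1.choose⟩
  refine ⟨HGProof.normalK hg K hsub hheart,
    HGProof.Gam hg ⧸ HGProof.Ksub hg K hsub hcl hheart, inferInstance,
    fun h => (QuotientGroup.mk (HGProof.psi hg h)), ?_, ?_, ?_⟩
  · intro q
    refine QuotientGroup.induction_on q (fun A => ?_)
    obtain ⟨a, rfl⟩ := HGProof.psi_surjective hg A
    exact ⟨a, rfl⟩
  · intro a b
    rw [QuotientGroup.eq]
    constructor
    · rintro ⟨k, hkK, hk⟩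
      have hb : HGProof.psi hg b = HGProof.psi hg a * HGProof.psi hg k := by
        rw [hk]; group
      have h1 : HGProof.psi hg (HGProof.pick hg a k) = HGProof.psi hg b := by
        rw [HGProof.psi_mul hg (HGProof.pick_mem hg a k)]; exact hb.symm
      have h2 := HGProof.coset_eq_of_mem hg K hsub hcl hheart hkK
        (HGProof.pick_mem hg a k)
      have h3 := HGProof.coset_eq_of_psi_eq hg K hsub hcl hheart h1
      exact h2.symm.trans h3
    · intro h
      have hb := HGProof.mem_self_coset hg K hheart b
      rw [← h] at hb
      obtain ⟨k, hkK, hk⟩ := (HGProof.mem_coset_iff hg K).mp hb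
      refine ⟨k, hkK, ?_⟩
      rw [HGProof.psi_mul hg hk]; group
  · intro a b z hz
    show QuotientGroup.mk (HGProof.psi hg z) = _
    rw [HGProof.psi_mul hg hz]
    rfl
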